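/- Let q be a string with shortest period g ≤ |q|/2, written q = (uv)^t u with |uv| = g, t ≥ 2, |v| ≥ 1. Then for any k ≥ t, the string (uv)^k u contains exactly k - t + 1 occurrences of q, at positions 0, g, 2g, ..., (k-t)g. -/
import Mathlib

/-- `g` is a period of the string `q`. -/
def isPeriod {α : Type*} (q : List α) (g : ℕ) : Prop :=
  0 < g ∧ g ≤ q.length ∧ ∀ a, a + g < q.length → q[a]? = q[a + g]?

/-- `k` concatenated copies of `s`. -/
def pow {α : Type*} (s : List α) (k : ℕ) : List α :=
  (List.replicate k s).flatten

/-- The set of occurrence (starting) positions of `s` in `t`. -/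
def occs {α : Type*} [DecidableEq α] (s t : List α) : Finset ℕ :=
  (Finset.range (t.length + 1)).filter (fun j => s <+: t.drop j)

lemma powSucc {α : Type*} (s : List α) (n : ℕ) : pow s (n+1) = s ++ pow s n := by
  unfold pow
  rw [List.replicate_succ, List.flatten_cons]

lemma pow_add' {α : Type*} (s : List α) (m n : ℕ) : pow s (m+n) = pow s m ++ pow s n := by
  unfold pow
  rw [List.replicate_add, List.flatten_append]

lemma length_pow {α : Type*} (s : List α) (k : ℕ) : (pow s k).length = k * s.length := by
  induction k with
  | zero => simp [pow]
  | succ n ih => rw [powSucc, List.length_append, ih]; ring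

lemma u_prefix {α : Type*} (u v : List α) (m : ℕ) : u <+: pow (u ++ v) m ++ u := by
  cases m with
  | zero => simp [pow]
  | succ n =>
    rw [powSucc, List.append_assoc, List.append_assoc]
    exact List.prefix_append u _

lemma prefix_getElem? {α : Type*} {s t : List α} (h : s <+: t) {x : ℕ} (hx : x < s.length) :
    s[x]? = t[x]? := by
  obtain ⟨c, rfl⟩ := h
  rw [List.getElem?_append_left hx]

lemma occ_at_mul {α : Type*} (u v : List α) (t k i : ℕ) (hik : i ≤ k - t) (htk : t ≤ k) :
    pow (u ++ v) t ++ u <+: (pow (u ++ v) k ++ u).drop (i * (u ++ v).length) := by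
  have h1 : k = i + (t + (k - t - i)) := by omega
  rw [h1, pow_add', List.append_assoc,
    List.drop_left' (by rw [length_pow]), pow_add', List.append_assoc]
  obtain ⟨c, hc⟩ := u_prefix u v (k - t - i)
  exact ⟨c, by rw [List.append_assoc, hc]⟩

theorem occurrences_in_run {α : Type*} [DecidableEq α] (u v q : List α) (g t k : ℕ)
    (hq : q = pow (u ++ v) t ++ u) (hg : g = (u ++ v).length)
    (ht : 2 ≤ t) (hv : v ≠ [])
    (hper : isPeriod q g) (hmin : ∀ g', isPeriod q g' → g ≤ g')
    (hk : t ≤ k) :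
    occs q (pow (u ++ v) k ++ u) = (Finset.range (k - t + 1)).image (· * g) := by
  have hgpos : 0 < g := hper.1
  have hlq : q.length = t * g + u.length := by
    rw [hq, List.length_append, length_pow, hg]
  have hlW : (pow (u ++ v) k ++ u).length = k * g + u.length := by
    rw [List.length_append, length_pow, hg]
  ext j
  simp only [occs, Finset.mem_filter, Finset.mem_range, Finset.mem_image]
  constructor
  · rintro ⟨hjlt, hpre⟩
    have hlen : q.length ≤ (pow (u ++ v) k ++ u).length - j := by
      have := hpre.length_le
      rwa [List.length_drop] at this
    have hjle : j ≤ (k - t) * g := by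
      rw [hlq, hlW] at hlen
      have : j + (t * g + u.length) ≤ k * g + u.length := by omega
      have h2 : j + t * g ≤ k * g := by omega
      have h3 : (k - t) * g + t * g = k * g := by
        rw [← Nat.add_mul]; congr 1; omega
      omega
    set a := j / g with ha
    set r := j % g with hr
    have hj : a * g + r = j := by
      rw [ha, hr, Nat.mul_comm]; exact Nat.div_add_mod j g
    have hak : a ≤ k - t := by
      have : j / g ≤ ((k - t) * g) / g := Nat.div_le_div_right hjle
      rwa [Nat.mul_div_cancel _ hgpos] at this
    have hocca : q <+: (pow (u ++ v) k ++ u).drop (a * g) := by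
      rw [hq, hg]; exact occ_at_mul u v t k a hak hk
    have hr0 : r = 0 := by
      by_contra hrne
      have hrlt : r < g := Nat.mod_lt _ hgpos
      have hperr : isPeriod q r := by
        refine ⟨Nat.pos_of_ne_zero hrne, ?_, ?_⟩
        · have : g ≤ q.length := hper.2.1
          omega
        · intro x hx
          have hx' : x < q.length := by omega
          have e1 : q[x + r]? = (pow (u ++ v) k ++ u)[a * g + (x + r)]? := by
            rw [prefix_getElem? hocca hx, List.getElem?_drop]
          have e2 : q[x]? = (pow (u ++ v) k ++ u)[j + x]? := by
            rw [prefix_getElem? hpre hx', List.getElem?_drop]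
          rw [e1, e2]
          congr 1
          omega
      have := hmin r hperr
      omega
    exact ⟨a, by omega, by omega⟩
  · rintro ⟨i, hi, rfl⟩
    constructor
    · rw [hlW]
      have : i * g ≤ k * g := Nat.mul_le_mul_right g (by omega)
      omega
    · rw [hq, hg]; exact occ_at_mul u v t k i (by omega) hk
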